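/- (Soundness of ι.) For all λ$-terms e, e', if e =λ$ e' then ι(e) =Λ$ ι(e'); and for all Λ$-terms M, M', if π(M) =λ$ π(M') then M =Λ$ M'. -/

import Mathlib

namespace Shift0

/-! ### The calculus Λ$ (de Bruijn representation) -/

/-- Terms of Λ$: variables, λ-abstractions, freeze `$(M)`, application, thaw `S₀(M)`. -/
inductive Tm : Type
  | var : Nat → Tm
  | lam : Tm → Tm
  | freeze : Tm → Tm
  | app : Tm → Tm → Tm
  | thaw : Tm → Tm
  deriving DecidableEq

namespace Tm

/-- Values of Λ$: variables, abstractions and frozen terms. -/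
inductive IsValue : Tm → Prop
  | var (n : Nat) : IsValue (.var n)
  | lam (M : Tm) : IsValue (.lam M)
  | freeze (M : Tm) : IsValue (.freeze M)

/-- Nonvalues of Λ$: applications and thawed terms. -/
inductive IsNonvalue : Tm → Prop
  | app (M N : Tm) : IsNonvalue (.app M N)
  | thaw (M : Tm) : IsNonvalue (.thaw M)

/-- Boolean value test. -/
def isVal : Tm → Bool
  | .var _ => true
  | .lam _ => true
  | .freeze _ => true
  | .app _ _ => false
  | .thaw _ => false

/-- Lift (shift) the free de Bruijn variables `≥ d` up by one. -/
def lift (d : Nat) : Tm → Tm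
  | .var n => if n < d then .var n else .var (n+1)
  | .lam M => .lam (lift (d+1) M)
  | .freeze M => .freeze (lift d M)
  | .app M N => .app (lift d M) (lift d N)
  | .thaw M => .thaw (lift d M)

/-- Capture-avoiding substitution `M[N/x]` (for the de Bruijn variable `x`);
the variables above `x` are shifted down by one. -/
def subst : Tm → Nat → Tm → Tm
  | .var n, x, N => if n = x then N else if n < x then .var n else .var (n-1)
  | .lam M, x, N => .lam (subst M (x+1) (N.lift 0))
  | .freeze M, x, N => .freeze (subst M x N)
  | .app M L, x, N => .app (subst M x N) (subst L x N)
  | .thaw M, x, N => .thaw (subst M x N)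

/-- `M $ N` is sugar for `$(N) M`. -/
def dol (M N : Tm) : Tm := .app (.freeze N) M

/-- `let x = M in N` is sugar for `S₀k.((λx.(k $ N)) $ M)`;
here `N` has the let-bound variable as de Bruijn index `0`. -/
def letIn (M N : Tm) : Tm :=
  .thaw (.lam (dol (.lam (dol (.var 1) (N.lift 1))) (M.lift 0)))

end Tm

/-- Bindable contexts `J ::= [] M | V [] | S₀([])`. -/
inductive JCtx : Type
  | appL : Tm → JCtx
  | appR : Tm → JCtx
  | thaw : JCtx

namespace JCtx

/-- Well-formedness: in `V []` the term `V` must be a value. -/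
def Wf : JCtx → Prop
  | .appL _ => True
  | .appR V => V.IsValue
  | .thaw => True

/-- Plugging a term into a bindable context. -/
def plug : JCtx → Tm → Tm
  | .appL N, M => .app M N
  | .appR V, M => .app V M
  | .thaw, M => .thaw M

/-- Lift the free variables `≥ d` of a bindable context. -/
def lift (d : Nat) : JCtx → JCtx
  | .appL N => .appL (N.lift d)
  | .appR V => .appR (V.lift d)
  | .thaw => .thaw

end JCtx

/-- Pure contexts `K ::= [] | J[K]`, represented as a list of bindable
contexts (head outermost). -/
abbrev KCtx : Type := List JCtx

/-- Plugging a term into a pure context. -/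
def KCtx.plug : KCtx → Tm → Tm
  | [], M => M
  | (J :: K), M => J.plug (KCtx.plug K M)

/-- Well-formedness of a pure context. -/
def KCtx.Wf (K : KCtx) : Prop := ∀ J ∈ K, JCtx.Wf J

/-- Lift the free variables `≥ d` of a pure context. -/
def KCtx.lift (d : Nat) (K : KCtx) : KCtx := K.map (JCtx.lift d)

namespace Tm

/-- The basic contractions of Λ$. -/
inductive Contr : Tm → Tm → Prop
  | betav (M V : Tm) : V.IsValue → Contr (.app (.lam M) V) (M.subst 0 V)
  | etav (V : Tm) : V.IsValue → Contr (.lam (.app (V.lift 0) (.var 0))) V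
  | dolv (V : Tm) : V.IsValue → Contr (.freeze V) (.lam (.app (.var 0) (V.lift 0)))
  | dolsh (V : Tm) : V.IsValue → Contr (.freeze (.thaw V)) V
  | shdol (M : Tm) : Contr (.thaw (.freeze M)) M
  | pure (V : Tm) : V.IsValue → Contr (.thaw (.lam (.app (.var 0) (V.lift 0)))) V
  | bind (J : JCtx) (P : Tm) : J.Wf → P.IsNonvalue →
      Contr (J.plug P) (letIn P ((J.lift 0).plug (.var 0)))

/-- One-step reduction of Λ$: closure of the contractions under arbitrary
contexts (including under binders). -/
inductive Step : Tm → Tm → Prop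
  | contr {M N : Tm} : Contr M N → Step M N
  | lam {M N : Tm} : Step M N → Step (.lam M) (.lam N)
  | freeze {M N : Tm} : Step M N → Step (.freeze M) (.freeze N)
  | appL {M N L : Tm} : Step M N → Step (.app M L) (.app N L)
  | appR {M N L : Tm} : Step M N → Step (.app L M) (.app L N)
  | thaw {M N : Tm} : Step M N → Step (.thaw M) (.thaw N)

/-- Multi-step reduction `↠Λ$`. -/
def Steps : Tm → Tm → Prop := Relation.ReflTransGen Step

/-- Convertibility `=Λ$`: the equivalence generated by reduction. -/
def Equiv : Tm → Tm → Prop := Relation.EqvGen Step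

end Tm

/-! ### The pure λ-calculus with βη -/

/-- Terms of the pure λ-calculus. -/
inductive Lam : Type
  | var : Nat → Lam
  | lam : Lam → Lam
  | app : Lam → Lam → Lam
  deriving DecidableEq

namespace Lam

/-- Lift the free de Bruijn variables `≥ d` up by one. -/
def lift (d : Nat) : Lam → Lam
  | .var n => if n < d then .var n else .var (n+1)
  | .lam M => .lam (lift (d+1) M)
  | .app M N => .app (lift d M) (lift d N)

/-- Capture-avoiding substitution `M[N/x]`. -/
def subst : Lam → Nat → Lam → Lam
  | .var n, x, N => if n = x then N else if n < x then .var n else .var (n-1)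
  | .lam M, x, N => .lam (subst M (x+1) (N.lift 0))
  | .app M L, x, N => .app (subst M x N) (subst L x N)

/-- β and η contractions. -/
inductive Contr : Lam → Lam → Prop
  | beta (M N : Lam) : Contr (.app (.lam M) N) (M.subst 0 N)
  | eta (M : Lam) : Contr (.lam (.app (M.lift 0) (.var 0))) M

/-- One-step βη-reduction, closed under arbitrary contexts. -/
inductive Step : Lam → Lam → Prop
  | contr {M N : Lam} : Contr M N → Step M N
  | lam {M N : Lam} : Step M N → Step (.lam M) (.lam N)
  | appL {M N L : Lam} : Step M N → Step (.app M L) (.app N L)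
  | appR {M N L : Lam} : Step M N → Step (.app L M) (.app L N)

/-- Multi-step βη-reduction `↠λ`. -/
def Steps : Lam → Lam → Prop := Relation.ReflTransGen Step

/-- βη-convertibility `=λ`. -/
def Equiv : Lam → Lam → Prop := Relation.EqvGen Step

end Lam

end Shift0

namespace Shift0

/-! ### The CPS translation `* : Λ$ → λ` and its value part `†` -/

mutual

/-- The CPS translation `M*`.  It is the full unfolding of the equations
`V* = λk.k V†`, `J[P]* = λk.P* (λx.(J[x]* k))`, `(V W)* = V† W†` and
`(S₀(V))* = V†`. -/
def cps : Tm → Lam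
  | .var n => .lam (.app (.var 0) (.var (n+1)))
  | .lam M => .lam (.app (.var 0) ((Lam.lam (cps M)).lift 0))
  | .freeze M => .lam (.app (.var 0) ((cps M).lift 0))
  | .app M N =>
      if M.isVal then
        if N.isVal then .app (cpsV M) (cpsV N)
        else
          .lam (.app ((cps N).lift 0)
            (.lam (.app (.app (((cpsV M).lift 0).lift 0) (.var 0)) (.var 1))))
      else
        if N.isVal then
          .lam (.app ((cps M).lift 0)
            (.lam (.app (.app (.var 0) (((cpsV N).lift 0).lift 0)) (.var 1))))
        else
          .lam (.app ((cps M).lift 0)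
            (.lam (.app
              (.lam (.app ((((cps N).lift 0).lift 0).lift 0)
                (.lam (.app (.app (.var 2) (.var 0)) (.var 1)))))
              (.var 1))))
  | .thaw M =>
      if M.isVal then cpsV M
      else .lam (.app ((cps M).lift 0) (.lam (.app (.var 0) (.var 1))))

/-- The value part `V†` of the CPS translation (junk on nonvalues). -/
def cpsV : Tm → Lam
  | .var n => .var n
  | .lam M => .lam (cps M)
  | .freeze M => cps M
  | .app _ _ => .var 0
  | .thaw _ => .var 0

end

/-! ### The direct-style translation `# : λ → Λ$` and its auxiliary `♮` -/

namespace Lam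

/-- Does the de Bruijn variable `x` occur free in the term? -/
def hasVar (x : Nat) : Lam → Bool
  | .var n => n = x
  | .lam M => hasVar (x+1) M
  | .app M N => hasVar x M || hasVar x N

/-- Shift the free de Bruijn variables `> d` down by one
(inverse of `lift d` on terms not containing `d` free). -/
def lower (d : Nat) : Lam → Lam
  | .var n => if d < n then .var (n-1) else .var n
  | .lam M => .lam (lower (d+1) M)
  | .app M N => .app (lower d M) (lower d N)

/-- Size of a λ-term. -/
def size : Lam → Nat
  | .var _ => 1
  | .lam M => size M + 1
  | .app M N => size M + size N + 1

theorem size_lower (d : Nat) (M : Lam) : (lower d M).size = M.size := by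
  induction M generalizing d with
  | var n => simp only [lower]; split <;> rfl
  | lam M ih => simp [lower, size, ih]
  | app M N ihM ihN => simp [lower, size, ihM, ihN]

end Lam

mutual

/-- The direct-style translation `M#`; the case `(λx.x N)# = N♮` (with
`x ∉ FV(N)`) is rendered by checking that de Bruijn variable `0` does not
occur in `N` and lowering the remaining variables. -/
def ds : Lam → Tm
  | .var n => .thaw (.var n)
  | .app M N => .app (nat M) (nat N)
  | .lam (.app (.var 0) N) =>
      if N.hasVar 0 then .thaw (.lam (.app (.var 0) (nat N)))
      else nat (N.lower 0)
  | .lam M => .thaw (.lam (ds M))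
termination_by M => M.size
decreasing_by all_goals simp [Lam.size, Lam.size_lower] <;> omega

/-- The auxiliary direct-style translation `M♮`. -/
def nat : Lam → Tm
  | .var n => .var n
  | .lam M => .lam (ds M)
  | .app M N => .freeze (.app (nat M) (nat N))
termination_by M => M.size
decreasing_by all_goals simp [Lam.size, Lam.size_lower] <;> omega

end

end Shift0

namespace Shift0

/-! ### Materzok's calculus λ$ -/

/-- Terms of λ$: variables, abstractions, applications, `S₀x.e`
(the body is under a binder) and `e $ e'`. -/
inductive LTm : Type
  | var : Nat → LTm
  | lam : LTm → LTm
  | app : LTm → LTm → LTm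
  | shift : LTm → LTm
  | dollar : LTm → LTm → LTm
  deriving DecidableEq

namespace LTm

/-- Values of λ$: variables and abstractions. -/
inductive IsValue : LTm → Prop
  | var (n : Nat) : IsValue (.var n)
  | lam (e : LTm) : IsValue (.lam e)

/-- Lift the free de Bruijn variables `≥ d` up by one. -/
def lift (d : Nat) : LTm → LTm
  | .var n => if n < d then .var n else .var (n+1)
  | .lam e => .lam (lift (d+1) e)
  | .app e f => .app (lift d e) (lift d f)
  | .shift e => .shift (lift (d+1) e)
  | .dollar e f => .dollar (lift d e) (lift d f)

/-- Capture-avoiding substitution `e[v/x]`. -/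
def subst : LTm → Nat → LTm → LTm
  | .var n, x, N => if n = x then N else if n < x then .var n else .var (n-1)
  | .lam e, x, N => .lam (subst e (x+1) (N.lift 0))
  | .app e f, x, N => .app (subst e x N) (subst f x N)
  | .shift e, x, N => .shift (subst e (x+1) (N.lift 0))
  | .dollar e f, x, N => .dollar (subst e x N) (subst f x N)

end LTm

/-- Pure contexts of λ$: `E ::= [] | E e | v E | E $ e`. -/
inductive ECtx : Type
  | hole : ECtx
  | appL : ECtx → LTm → ECtx
  | appR : LTm → ECtx → ECtx
  | dolL : ECtx → LTm → ECtx

namespace ECtx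

/-- Well-formedness: in `v E` the term `v` must be a value. -/
def Wf : ECtx → Prop
  | .hole => True
  | .appL E _ => E.Wf
  | .appR v E => v.IsValue ∧ E.Wf
  | .dolL E _ => E.Wf

/-- Plugging a term into a pure context of λ$. -/
def plug : ECtx → LTm → LTm
  | .hole, e => e
  | .appL E f, e => .app (E.plug e) f
  | .appR v E, e => .app v (E.plug e)
  | .dolL E f, e => .dollar (E.plug e) f

/-- Lift the free variables `≥ d` of a pure context. -/
def lift (d : Nat) : ECtx → ECtx
  | .hole => .hole
  | .appL E f => .appL (E.lift d) (f.lift d)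
  | .appR v E => .appR (v.lift d) (E.lift d)
  | .dolL E f => .dolL (E.lift d) (f.lift d)

end ECtx

namespace LTm

/-- The axioms of λ$. -/
inductive Ax : LTm → LTm → Prop
  | betav (e v : LTm) : v.IsValue → Ax (.app (.lam e) v) (e.subst 0 v)
  | etav (v : LTm) : v.IsValue → Ax (.lam (.app (v.lift 0) (.var 0))) v
  | dolv (v w : LTm) : v.IsValue → w.IsValue → Ax (.dollar v w) (.app v w)
  | dolE (v : LTm) (E : ECtx) (e : LTm) : v.IsValue → E.Wf →
      Ax (.dollar v (E.plug e))
         (.dollar (.lam (.dollar (v.lift 0) ((E.lift 0).plug (.var 0)))) e)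
  | betad (v e : LTm) : v.IsValue → Ax (.dollar v (.shift e)) (e.subst 0 v)
  | etad (e : LTm) : Ax (.shift (.dollar (.var 0) (e.lift 0))) e

/-- The axioms applied in an arbitrary context. -/
inductive AStep : LTm → LTm → Prop
  | ax {e f : LTm} : Ax e f → AStep e f
  | lam {e f : LTm} : AStep e f → AStep (.lam e) (.lam f)
  | appL {e f g : LTm} : AStep e f → AStep (.app e g) (.app f g)
  | appR {e f g : LTm} : AStep e f → AStep (.app g e) (.app g f)
  | shift {e f : LTm} : AStep e f → AStep (.shift e) (.shift f)
  | dolL {e f g : LTm} : AStep e f → AStep (.dollar e g) (.dollar f g)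
  | dolR {e f g : LTm} : AStep e f → AStep (.dollar g e) (.dollar g f)

/-- The equational theory `=λ$` generated by the axioms. -/
def Equiv : LTm → LTm → Prop := Relation.EqvGen AStep

end LTm

/-- The embedding `ι : λ$ → Λ$`. -/
def iota : LTm → Tm
  | .var n => .var n
  | .lam e => .lam (iota e)
  | .app e f => .app (iota e) (iota f)
  | .shift e => .thaw (.lam (iota e))
  | .dollar e f => .app (.freeze (iota f)) (iota e)

/-- The translation `π : Λ$ → λ$`. -/
def pi : Tm → LTm
  | .var n => .var n
  | .lam M => .lam (pi M)
  | .freeze M => .lam (.dollar (.var 0) ((pi M).lift 0))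
  | .app M N => .app (pi M) (pi N)
  | .thaw M => .app (.lam (.shift (.app (.var 1) (.var 0)))) (pi M)

/-- Materzok's CPS translation `⟦·⟧ : λ$ → λ` (with the value translation
`⟪x⟫ = x`, `⟪λx.e⟫ = λx.⟦e⟧` inlined). -/
def mcps : LTm → Lam
  | .var n => .lam (.app (.var 0) (.var (n+1)))
  | .lam e => .lam (.app (.var 0) ((Lam.lam (mcps e)).lift 0))
  | .app e f => .lam (.app ((mcps e).lift 0)
      (.lam (.app (((mcps f).lift 0).lift 0)
        (.lam (.app (.app (.var 1) (.var 0)) (.var 2))))))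
  | .shift e => .lam (mcps e)
  | .dollar e f => .lam (.app ((mcps e).lift 0)
      (.lam (.app (.app (((mcps f).lift 0).lift 0) (.var 0)) (.var 1))))

end Shift0

namespace Shift0

namespace Tm

theorem lift_lift (M : Tm) : ∀ d e : Nat, e ≤ d →
    lift e (lift d M) = lift (d+1) (lift e M) := by
  induction M with
  | var n =>
      intro d e h
      simp only [lift]
      split <;> split <;> simp only [lift] <;> split_ifs <;> first | rfl | omega
  | lam M ih =>
      intro d e h
      simp only [lift]
      rw [ih (d+1) (e+1) (by omega)]
  | freeze M ih => intro d e h; simp only [lift]; rw [ih d e h]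
  | app M N ihM ihN => intro d e h; simp only [lift]; rw [ihM d e h, ihN d e h]
  | thaw M ih => intro d e h; simp only [lift]; rw [ih d e h]

theorem subst_lift (M : Tm) : ∀ (d : Nat) (N : Tm), (M.lift d).subst d N = M := by
  induction M with
  | var n =>
      intro d N
      simp only [lift]
      split <;> simp only [subst] <;> split <;> first | rfl | omega | (split <;> first | rfl | omega | simp | (congr 1; omega))
  | lam M ih => intro d N; simp only [lift, subst]; rw [ih]
  | freeze M ih => intro d N; simp only [lift, subst]; rw [ih]
  | app M L ihM ihL => intro d N; simp only [lift, subst]; rw [ihM, ihL]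
  | thaw M ih => intro d N; simp only [lift, subst]; rw [ih]

theorem IsValue.lift {V : Tm} (h : V.IsValue) (d : Nat) : (V.lift d).IsValue := by
  cases h with
  | var n => simp only [Tm.lift]; split <;> exact .var _
  | lam M => exact .lam _
  | freeze M => exact .freeze _

theorem value_or_nonvalue (M : Tm) : M.IsValue ∨ M.IsNonvalue := by
  cases M with
  | var n => exact .inl (.var n)
  | lam M => exact .inl (.lam M)
  | freeze M => exact .inl (.freeze M)
  | app M N => exact .inr (.app M N)
  | thaw M => exact .inr (.thaw M)

theorem Equiv.cong {f : Tm → Tm} (hf : ∀ {a b : Tm}, Step a b → Step (f a) (f b))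
    {M N : Tm} (h : Equiv M N) : Equiv (f M) (f N) := by
  induction h with
  | rel a b hab => exact .rel _ _ (hf hab)
  | refl a => exact .refl _
  | symm a b _ ih => exact .symm _ _ ih
  | trans a b c _ _ ih1 ih2 => exact .trans _ _ _ ih1 ih2

theorem Equiv.appc {M M' N N' : Tm} (h1 : Equiv M M') (h2 : Equiv N N') :
    Equiv (.app M N) (.app M' N') :=
  .trans _ _ _ (Equiv.cong (f := fun X => Tm.app X N) (fun h => Step.appL h) h1)
    (Equiv.cong (f := fun X => Tm.app M' X) (fun h => Step.appR h) h2)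

end Tm

namespace JCtx

theorem plug_subst0 (J : JCtx) (N : Tm) :
    ((J.lift 0).plug (.var 0)).subst 0 N = J.plug N := by
  cases J <;> simp [JCtx.plug, JCtx.lift, Tm.subst, Tm.subst_lift]

theorem plug_lift1 (J : JCtx) :
    ((J.lift 0).plug (.var 0)).lift 1 = ((J.lift 0).lift 0).plug (.var 0) := by
  cases J <;> simp [JCtx.plug, JCtx.lift, Tm.lift, Tm.lift_lift _ 0 0 le_rfl]

theorem Wf.lift {J : JCtx} (h : J.Wf) (d : Nat) : (J.lift d).Wf := by
  cases J with
  | appL N => trivial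
  | appR V => exact Tm.IsValue.lift h d
  | thaw => trivial

end JCtx

namespace Tm

theorem equiv_of_steps {M N : Tm} (h : Steps M N) : Equiv M N := by
  induction h with
  | refl => exact .refl _
  | tail _ h ih => exact .trans _ _ _ ih (.rel _ _ h)

/-- Single-frame `$E` law: `V $ J[N] = (λy. V↑ $ J↑[y]) $ N`. -/
theorem sf (J : JCtx) (hJ : J.Wf) {V : Tm} (hV : V.IsValue) (N : Tm) :
    Equiv (.app (.freeze (J.plug N)) V)
      (.app (.freeze N) (.lam (.app (.freeze ((J.lift 0).plug (.var 0))) (V.lift 0)))) := by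
  set W : Tm := .lam (.app (.freeze ((J.lift 0).plug (.var 0))) (V.lift 0)) with hW
  rcases value_or_nonvalue N with hN | hN
  · -- N a value: reduce the right-hand side to the left-hand side
    have s1 : Step (Tm.app (.freeze N) W) (.app (.lam (.app (.var 0) (N.lift 0))) W) :=
      Step.appL (Step.contr (Contr.dolv N hN))
    have s2 : Step (Tm.app (.lam (.app (.var 0) (N.lift 0))) W) (.app W N) := by
      have := Step.contr (Contr.betav (.app (.var 0) (N.lift 0)) W (.lam _))
      simpa [Tm.subst, subst_lift] using this
    have s3 : Step (Tm.app W N) (.app (.freeze (J.plug N)) V) := by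
      have := Step.contr (Contr.betav (.app (.freeze ((J.lift 0).plug (.var 0))) (V.lift 0)) N hN)
      simpa [Tm.subst, subst_lift, JCtx.plug_subst0] using this
    exact .symm _ _ (.trans _ _ _ (.rel _ _ s1) (.trans _ _ _ (.rel _ _ s2) (.rel _ _ s3)))
  · -- N a nonvalue: reduce the left-hand side to the right-hand side
    have s1 : Step (Tm.app (.freeze (J.plug N)) V)
        (.app (.freeze (letIn N ((J.lift 0).plug (.var 0)))) V) :=
      Step.appL (Step.freeze (Step.contr (Contr.bind J N hJ hN)))
    set X : Tm := .app (.freeze (N.lift 0))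
        (.lam (.app (.freeze ((((J.lift 0).plug (.var 0))).lift 1)) (.var 1))) with hX
    have s2 : Step (Tm.app (.freeze (letIn N ((J.lift 0).plug (.var 0)))) V)
        (.app (.lam X) V) :=
      Step.appL (Step.contr (Contr.dolsh (.lam X) (.lam _)))
    have s3 : Step (Tm.app (.lam X) V) (.app (.freeze N) W) := by
      have := Step.contr (Contr.betav X V hV)
      simpa [hX, hW, Tm.subst, subst_lift] using this
    exact .trans _ _ _ (.rel _ _ s1) (.trans _ _ _ (.rel _ _ s2) (.rel _ _ s3))

/-- Multi-frame `$E` law: `V $ K[M] = (λy. V↑ $ K↑[y]) $ M`. -/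
theorem dolK (K : KCtx) (hK : K.Wf) {V : Tm} (hV : V.IsValue) (M : Tm) :
    Equiv (.app (.freeze (K.plug M)) V)
      (.app (.freeze M) (.lam (.app (.freeze ((K.lift 0).plug (.var 0))) (V.lift 0)))) := by
  induction K generalizing V with
  | nil =>
    have u1 : Step (Tm.app (.freeze M) (.lam (.app (.freeze (.var 0)) (V.lift 0))))
        (.app (.freeze M) (.lam (.app (.lam (.app (.var 0) (.var 1))) (V.lift 0)))) := by
      have := Step.appR (L := Tm.freeze M) (Step.lam (Step.appL
        (L := V.lift 0) (Step.contr (Contr.dolv (.var 0) (.var 0)))))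
      simpa [Tm.lift] using this
    have u2 : Step (Tm.app (.freeze M) (.lam (.app (.lam (.app (.var 0) (.var 1))) (V.lift 0))))
        (.app (.freeze M) (.lam (.app (V.lift 0) (.var 0)))) := by
      have := Step.appR (L := Tm.freeze M) (Step.lam
        (Step.contr (Contr.betav (.app (.var 0) (.var 1)) (V.lift 0) (hV.lift 0))))
      simpa [Tm.subst] using this
    have u3 : Step (Tm.app (.freeze M) (.lam (.app (V.lift 0) (.var 0))))
        (.app (.freeze M) V) :=
      Step.appR (Step.contr (Contr.etav V hV))
    exact .symm _ _ (.trans _ _ _ (.rel _ _ u1) (.trans _ _ _ (.rel _ _ u2) (.rel _ _ u3)))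
  | cons J K ih =>
    have hJ : J.Wf := hK J List.mem_cons_self
    have hK' : KCtx.Wf K := fun J' h => hK J' (List.mem_cons_of_mem _ h)
    set W : Tm := .lam (.app (.freeze ((J.lift 0).plug (.var 0))) (V.lift 0)) with hWdef
    have h1 : Equiv (.app (.freeze (J.plug (KCtx.plug K M))) V) (.app (.freeze (KCtx.plug K M)) W) :=
      sf J hJ hV (KCtx.plug K M)
    have h2 := ih hK' (V := W) (.lam _)
    have h3 : Equiv
        (.app (.freeze ((KCtx.lift 0 K).plug (.var 0))) (W.lift 0))
        (.app (.freeze ((J.lift 0).plug ((KCtx.lift 0 K).plug (.var 0)))) (V.lift 0)) := by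
      have h4 := sf (J.lift 0) (hJ.lift 0) (hV.lift 0) ((KCtx.lift 0 K).plug (.var 0))
      have e1 : W.lift 0 = Tm.lam (.app (.freeze (((J.lift 0).lift 0).plug (.var 0)))
          ((V.lift 0).lift 0)) := by
        rw [hWdef]
        simp only [Tm.lift]
        rw [show (0:Nat)+1 = 1 from rfl, JCtx.plug_lift1, ← Tm.lift_lift V 0 0 le_rfl]
      rw [e1]
      exact .symm _ _ h4
    refine .trans _ _ _ h1 (.trans _ _ _ h2 ?_)
    exact Equiv.cong (f := fun X => Tm.app (.freeze M) (.lam X)) (fun h => Step.appR (Step.lam h)) h3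

end Tm
theorem iota_value {v : LTm} (h : v.IsValue) : (iota v).IsValue := by
  cases h with
  | var n => exact .var n
  | lam e => exact .lam _

theorem iota_lift (e : LTm) (d : Nat) : iota (e.lift d) = (iota e).lift d := by
  induction e generalizing d with
  | var n => simp only [LTm.lift]; split <;> simp [iota, Tm.lift, *]
  | lam e ih => simp [LTm.lift, iota, Tm.lift, ih]
  | app e f ihe ihf => simp [LTm.lift, iota, Tm.lift, ihe, ihf]
  | shift e ih => simp [LTm.lift, iota, Tm.lift, ih]
  | dollar e f ihe ihf => simp [LTm.lift, iota, Tm.lift, ihe, ihf]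

theorem iota_subst (e : LTm) (x : Nat) (v : LTm) :
    iota (e.subst x v) = (iota e).subst x (iota v) := by
  induction e generalizing x v with
  | var n => simp only [LTm.subst]; split_ifs <;> simp [iota, Tm.subst, *]
  | lam e ih => simp [LTm.subst, iota, Tm.subst, ih, iota_lift]
  | app e f ihe ihf => simp [LTm.subst, iota, Tm.subst, ihe, ihf]
  | shift e ih => simp [LTm.subst, iota, Tm.subst, ih, iota_lift]
  | dollar e f ihe ihf => simp [LTm.subst, iota, Tm.subst, ihe, ihf]

/-- The image of a λ$ pure context under ι, as a Λ$ pure context. -/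
def ectxIota : ECtx → KCtx
  | .hole => []
  | .appL E f => .appL (iota f) :: ectxIota E
  | .appR v E => .appR (iota v) :: ectxIota E
  | .dolL E f => .appR (.freeze (iota f)) :: ectxIota E

theorem ectxIota_plug (E : ECtx) (e : LTm) :
    iota (E.plug e) = KCtx.plug (ectxIota E) (iota e) := by
  induction E <;> simp [ECtx.plug, ectxIota, KCtx.plug, iota, JCtx.plug, *]

theorem ectxIota_lift (E : ECtx) (d : Nat) :
    ectxIota (E.lift d) = KCtx.lift d (ectxIota E) := by
  induction E <;> simp [ECtx.lift, ectxIota, KCtx.lift, JCtx.lift, iota_lift, Tm.lift, *]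

theorem ectxIota_wf (E : ECtx) (h : E.Wf) : KCtx.Wf (ectxIota E) := by
  induction E with
  | hole => intro J hJ; cases hJ
  | appL E f ih =>
      intro J hJ
      rcases List.mem_cons.1 hJ with rfl | hJ
      · trivial
      · exact ih h J hJ
  | appR v E ih =>
      intro J hJ
      rcases List.mem_cons.1 hJ with rfl | hJ
      · exact iota_value h.1
      · exact ih h.2 J hJ
  | dolL E f ih =>
      intro J hJ
      rcases List.mem_cons.1 hJ with rfl | hJ
      · exact .freeze _
      · exact ih h J hJ

theorem ax_sound {e f : LTm} (h : LTm.Ax e f) : Tm.Equiv (iota e) (iota f) := by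
  cases h with
  | betav e v hv =>
      rw [iota_subst]
      exact .rel _ _ (Tm.Step.contr (Tm.Contr.betav (iota e) (iota v) (iota_value hv)))
  | etav v hv =>
      exact .rel _ _ (by
        simpa [iota, iota_lift] using
          Tm.Step.contr (Tm.Contr.etav (iota f) (iota_value hv)))
  | dolv v w hv hw =>
      simp only [iota]
      have s1 : Tm.Step (.app (.freeze (iota w)) (iota v))
          (.app (.lam (.app (.var 0) ((iota w).lift 0))) (iota v)) :=
        Tm.Step.appL (Tm.Step.contr (Tm.Contr.dolv _ (iota_value hw)))
      have s2 : Tm.Step (Tm.app (.lam (.app (.var 0) ((iota w).lift 0))) (iota v))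
          (.app (iota v) (iota w)) := by
        simpa [Tm.subst, Tm.subst_lift] using
          Tm.Step.contr (Tm.Contr.betav (.app (.var 0) ((iota w).lift 0)) (iota v) (iota_value hv))
      exact .trans _ _ _ (.rel _ _ s1) (.rel _ _ s2)
  | dolE v E e hv hE =>
      have hv' := iota_value hv
      simp only [iota, ectxIota_plug, ectxIota_lift, iota_lift]
      simpa [iota] using Tm.dolK (ectxIota E) (ectxIota_wf E hE) hv' (iota e)
  | betad v e hv =>
      rw [iota_subst]
      simp only [iota]
      have s1 : Tm.Step (.app (.freeze (.thaw (.lam (iota e)))) (iota v))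
          (.app (.lam (iota e)) (iota v)) :=
        Tm.Step.appL (Tm.Step.contr (Tm.Contr.dolsh (.lam (iota e)) (.lam _)))
      have s2 : Tm.Step (Tm.app (.lam (iota e)) (iota v)) ((iota e).subst 0 (iota v)) :=
        Tm.Step.contr (Tm.Contr.betav (iota e) (iota v) (iota_value hv))
      exact .trans _ _ _ (.rel _ _ s1) (.rel _ _ s2)
  | etad e =>
      simp only [iota, iota_lift]
      have s1 : Tm.Step (Tm.thaw (.lam (.app (.freeze ((iota f).lift 0)) (.var 0))))
          (.thaw (.freeze (iota f))) :=
        Tm.Step.thaw (by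
          simpa [Tm.lift] using Tm.Step.contr (Tm.Contr.etav (.freeze (iota f)) (.freeze _)))
      have s2 : Tm.Step (Tm.thaw (.freeze (iota f))) (iota f) :=
        Tm.Step.contr (Tm.Contr.shdol _)
      exact .trans _ _ _ (.rel _ _ s1) (.rel _ _ s2)

theorem astep_sound {e f : LTm} (h : LTm.AStep e f) : Tm.Equiv (iota e) (iota f) := by
  induction h with
  | ax h => exact ax_sound h
  | lam _ ih => exact Tm.Equiv.cong (f := Tm.lam) (fun h => Tm.Step.lam h) ih
  | appL _ ih =>
      exact Tm.Equiv.cong (f := fun X => Tm.app X (iota _)) (fun h => Tm.Step.appL h) ih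
  | appR _ ih =>
      exact Tm.Equiv.cong (f := fun X => Tm.app (iota _) X) (fun h => Tm.Step.appR h) ih
  | shift _ ih =>
      exact Tm.Equiv.cong (f := fun X => Tm.thaw (.lam X))
        (fun h => Tm.Step.thaw (Tm.Step.lam h)) ih
  | dolL _ ih =>
      exact Tm.Equiv.cong (f := fun X => Tm.app (.freeze (iota _)) X)
        (fun h => Tm.Step.appR h) ih
  | dolR _ ih =>
      exact Tm.Equiv.cong (f := fun X => Tm.app (.freeze X) (iota _))
        (fun h => Tm.Step.appL (Tm.Step.freeze h)) ih

theorem equiv_sound {e f : LTm} (h : LTm.Equiv e f) : Tm.Equiv (iota e) (iota f) := by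
  induction h with
  | rel _ _ h => exact astep_sound h
  | refl _ => exact .refl _
  | symm _ _ _ ih => exact .symm _ _ ih
  | trans _ _ _ _ _ ih1 ih2 => exact .trans _ _ _ ih1 ih2

/-- The ι-image of `λx.S₀k.x k`. -/
def Lm0 : Tm := .lam (.thaw (.lam (.app (.var 1) (.var 0))))

theorem lift_Lm0 (d : Nat) : Lm0.lift d = Lm0 := by
  simp only [Lm0, Tm.lift,
    if_pos (by omega : (1:Nat) < d+1+1), if_pos (by omega : (0:Nat) < d+1+1)]

theorem thaw_equiv (X : Tm) : Tm.Equiv (.app Lm0 X) (.thaw X) := by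
  rcases Tm.value_or_nonvalue X with hX | hX
  · have s1 : Tm.Step (.app Lm0 X) (.thaw (.lam (.app (X.lift 0) (.var 0)))) := by
      simpa [Lm0, Tm.subst, Tm.lift] using
        Tm.Step.contr (Tm.Contr.betav (.thaw (.lam (.app (.var 1) (.var 0)))) X hX)
    have s2 : Tm.Step (Tm.thaw (.lam (.app (X.lift 0) (.var 0)))) (.thaw X) :=
      Tm.Step.thaw (Tm.Step.contr (Tm.Contr.etav X hX))
    exact .trans _ _ _ (.rel _ _ s1) (.rel _ _ s2)
  · have s1 : Tm.Step (.app Lm0 X)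
        (.thaw (.lam (.app (.freeze (X.lift 0))
          (.lam (.app (.freeze (.app Lm0 (.var 0))) (.var 1)))))) := by
      have := Tm.Step.contr (Tm.Contr.bind (.appR Lm0) X (Tm.IsValue.lam _) hX)
      simpa [Tm.letIn, Tm.dol, JCtx.lift, JCtx.plug, lift_Lm0, Tm.lift] using this
    have s2 : Tm.Step
        (Tm.thaw (.lam (.app (.freeze (X.lift 0))
          (.lam (.app (.freeze (.app Lm0 (.var 0))) (.var 1))))))
        (.thaw (.lam (.app (.freeze (X.lift 0))
          (.lam (.app (.freeze (.thaw (.lam (.app (.var 1) (.var 0))))) (.var 1)))))) :=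
      Tm.Step.thaw (Tm.Step.lam (Tm.Step.appR (Tm.Step.lam (Tm.Step.appL (Tm.Step.freeze (by
        simpa [Lm0, Tm.subst, Tm.lift] using
          Tm.Step.contr (Tm.Contr.betav (.thaw (.lam (.app (.var 1) (.var 0)))) (.var 0)
            (.var 0))))))))
    have s3 : Tm.Step
        (Tm.thaw (.lam (.app (.freeze (X.lift 0))
          (.lam (.app (.freeze (.thaw (.lam (.app (.var 1) (.var 0))))) (.var 1))))))
        (.thaw (.lam (.app (.freeze (X.lift 0))
          (.lam (.app (.freeze (.thaw (.var 0))) (.var 1)))))) :=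
      Tm.Step.thaw (Tm.Step.lam (Tm.Step.appR (Tm.Step.lam (Tm.Step.appL (Tm.Step.freeze
        (Tm.Step.thaw (by
          simpa [Tm.lift] using Tm.Step.contr (Tm.Contr.etav (.var 0) (.var 0)))))))))
    have s4 : Tm.Step (Tm.thaw X)
        (.thaw (.lam (.app (.freeze (X.lift 0))
          (.lam (.app (.freeze (.thaw (.var 0))) (.var 1)))))) := by
      have := Tm.Step.contr (Tm.Contr.bind .thaw X trivial hX)
      simpa [Tm.letIn, Tm.dol, JCtx.lift, JCtx.plug, Tm.lift] using this
    exact .trans _ _ _ (.rel _ _ s1) (.trans _ _ _ (.rel _ _ s2)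
      (.trans _ _ _ (.rel _ _ s3) (.symm _ _ (.rel _ _ s4))))

theorem iotapi (M : Tm) : Tm.Equiv (iota (pi M)) M := by
  induction M with
  | var n => exact .refl _
  | lam M ih => exact Tm.Equiv.cong (f := Tm.lam) (fun h => Tm.Step.lam h) ih
  | freeze M ih =>
      simp only [pi, iota, iota_lift]
      have s1 : Tm.Step (Tm.lam (.app (.freeze ((iota (pi M)).lift 0)) (.var 0)))
          (.freeze (iota (pi M))) := by
        simpa [Tm.lift] using Tm.Step.contr (Tm.Contr.etav (.freeze (iota (pi M))) (.freeze _))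
      exact .trans _ _ _ (.rel _ _ s1)
        (Tm.Equiv.cong (f := Tm.freeze) (fun h => Tm.Step.freeze h) ih)
  | app M N ihM ihN => simp only [pi, iota]; exact Tm.Equiv.appc ihM ihN
  | thaw M ih =>
      simp only [pi, iota]
      exact .trans _ _ _ (thaw_equiv (iota (pi M)))
        (Tm.Equiv.cong (f := Tm.thaw) (fun h => Tm.Step.thaw h) ih)
/-- **Soundness of ι.**  If `e =λ$ e'` then `ι(e) =Λ$ ι(e')`; and if
`π(M) =λ$ π(M')` then `M =Λ$ M'`. -/
theorem iota_sound :
    (∀ e e' : LTm, LTm.Equiv e e' → Tm.Equiv (iota e) (iota e')) ∧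
    (∀ M M' : Tm, LTm.Equiv (pi M) (pi M') → Tm.Equiv M M') := by
  refine ⟨fun e e' h => equiv_sound h, fun M M' h => ?_⟩
  exact .trans _ _ _ (.symm _ _ (iotapi M)) (.trans _ _ _ (equiv_sound h) (iotapi M'))

end Shift0
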